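/- arXiv:2009.05973 — 3 statements merged into one kernel-verified Lean document; each statement's English description precedes it below -/
import Mathlib

section
/- Let ρ and τ be words on distinct integers with standardizations that are ballot permutations, such that the concatenation ρτ is a permutation of {1,…,n}, with ρ of length l ≥ 1 and τ nonempty with first letters ρ₁ > τ₁. Then in π = ρʳτ (the reversal of ρ followed by τ), the position l+1 is the first lowest position of π. -/
open scoped Classical

/-- Number of descents of a word. -/
def descents (l : List ℤ) : ℕ := ((l.zip l.tail).filter (fun p => decide (p.2 < p.1))).length

/-- Number of ascents of a word. -/
def ascents (l : List ℤ) : ℕ := ((l.zip l.tail).filter (fun p => decide (p.1 < p.2))).length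

/-- Height of a word: ascents minus descents. -/
def ht (l : List ℤ) : ℤ := (ascents l : ℤ) - (descents l : ℤ)

/-- A word is ballot if every prefix has nonnegative height. -/
def IsBallot (l : List ℤ) : Prop := ∀ k : ℕ, 0 ≤ ht (l.take k)

/-- Depth: negative of the minimum height over nonempty prefixes (0 for the empty word;
note every word of length ≥ 1 has a prefix of height 0, so folding with 0 is harmless). -/
def depth (l : List ℤ) : ℤ :=
  -(((List.range l.length).map (fun i => ht (l.take (i + 1)))).foldr min 0)

/-- Number of peaks of a word. -/
def peaks (l : List ℤ) : ℕ :=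
  ((l.zip (l.tail.zip l.tail.tail)).filter
    (fun p => decide (p.1 < p.2.1 ∧ p.2.2 < p.2.1))).length

/-- The list [1, 2, ..., n] as integers. -/
def baseList (n : ℕ) : List ℤ := (List.range n).map (fun i => (i : ℤ) + 1)

/-- The one-line word of a permutation of {1,…,n}. -/
def permList {n : ℕ} (σ : Equiv.Perm (Fin n)) : List ℤ :=
  List.ofFn (fun i => ((σ i : ℕ) : ℤ) + 1)

/-- Standardization of a word on distinct integers. -/
def stdz (l : List ℤ) : List ℤ :=
  l.map (fun x => ((l.filter (fun y => decide (y < x))).length : ℤ) + 1)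

def sgn (a b : ℤ) : ℤ := if a < b then 1 else if b < a then -1 else 0

lemma ht_nil : ht [] = 0 := by simp [ht, ascents, descents]
lemma ht_single (a : ℤ) : ht [a] = 0 := by simp [ht, ascents, descents]

lemma ht_cons_cons (a b : ℤ) (t : List ℤ) :
    ht (a :: b :: t) = sgn a b + ht (b :: t) := by
  simp only [ht, ascents, descents, sgn, List.zip, List.zip_cons_cons, List.tail_cons, List.filter]
  rcases lt_trichotomy a b with h | h | h
  · simp [h, not_lt.mpr h.le]; push_cast; ring
  · simp [h, lt_irrefl]
  · simp [h, not_lt.mpr h.le]; push_cast; ring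

lemma ht_cons (a : ℤ) (t : List ℤ) (h : t ≠ []) :
    ht (a :: t) = sgn a t.headI + ht t := by
  cases t with
  | nil => simp at h
  | cons b t' => rw [ht_cons_cons]; rfl

lemma headI_take (t : List ℤ) (k : ℕ) : (t.take (k + 1)).headI = t.headI := by
  cases t <;> simp

lemma take_ne_nil (t : List ℤ) (k : ℕ) (h : t ≠ []) : t.take (k + 1) ≠ [] := by
  cases t <;> simp_all

lemma headI_append (a b : List ℤ) (h : a ≠ []) : (a ++ b).headI = a.headI := by
  cases a <;> simp_all

lemma ht_append (a b : List ℤ) (ha : a ≠ []) (hb : b ≠ []) :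
    ht (a ++ b) = ht a + sgn a.reverse.headI b.headI + ht b := by
  induction a with
  | nil => simp at ha
  | cons x a' ih =>
    cases a' with
    | nil => simp [ht_cons x b hb, ht_single]
    | cons y a'' =>
      have h1 : (y :: a'') ≠ [] := by simp
      have h2 : ((y :: a'') ++ b) ≠ [] := by simp
      rw [List.cons_append, ht_cons x _ h2, headI_append _ _ h1, ih h1,
        ht_cons_cons]
      have : (x :: y :: a'').reverse.headI = (y :: a'').reverse.headI := by
        simp only [List.reverse_cons]
        exact headI_append _ _ (by simp)
      rw [this]
      simp only [List.headI]
      ring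

lemma sgn_swap (a b : ℤ) : sgn a b = -sgn b a := by
  rcases lt_trichotomy a b with h | h | h
  · simp [sgn, h, lt_asymm h]
  · simp [sgn, h, lt_irrefl]
  · simp [sgn, h, lt_asymm h]

lemma ht_reverse (l : List ℤ) : ht l.reverse = -ht l := by
  induction l with
  | nil => simp [ht_nil]
  | cons x t ih =>
    cases t with
    | nil => simp [ht_single]
    | cons y t' =>
      have h1 : (y :: t') ≠ [] := by simp
      have h2 : (y :: t').reverse ≠ [] := by simp
      rw [List.reverse_cons, ht_append _ _ h2 (by simp), ht_single,
        List.reverse_reverse, ht_cons x _ h1, ih]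
      simp only [List.headI]
      linarith [sgn_swap x y]

lemma ht_drop (w : List ℤ) (k : ℕ) (h : k < w.length) :
    ht (w.drop k) = ht w - ht (w.take (k + 1)) := by
  induction w generalizing k with
  | nil => simp at h
  | cons a t ih =>
    cases k with
    | zero => simp [ht_single]
    | succ k' =>
      simp only [List.length_cons, Nat.succ_lt_succ_iff] at h
      have ht' : t ≠ [] := by intro hh; rw [hh] at h; simp at h
      have htk : t.take (k' + 1) ≠ [] := take_ne_nil t k' ht'
      rw [List.drop_succ_cons, List.take_succ_cons, ht_cons a _ htk,
        headI_take, ht_cons a t ht', ih k' h]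
      ring

lemma ht_map (f : ℤ → ℤ) (l : List ℤ)
    (hf : ∀ a ∈ l, ∀ b ∈ l, sgn (f a) (f b) = sgn a b) :
    ht (l.map f) = ht l := by
  induction l with
  | nil => rfl
  | cons a t ih =>
    cases t with
    | nil => simp [ht_single]
    | cons b t' =>
      simp only [List.map_cons]
      rw [ht_cons_cons, ht_cons_cons,
        hf a (by simp) b (by simp)]
      have := ih (fun x hx y hy => hf x (List.mem_cons_of_mem _ hx) y (List.mem_cons_of_mem _ hy))
      simp only [List.map_cons] at this
      rw [this]

lemma flen_mono (l : List ℤ) (a b : ℤ) (hab : a < b) :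
    (l.filter (fun y => decide (y < a))).length ≤ (l.filter (fun y => decide (y < b))).length := by
  induction l with
  | nil => simp
  | cons c t ih =>
    simp only [List.filter]
    rcases lt_or_ge c a with h | h
    · simp [h, h.trans hab]; omega
    · rcases lt_or_ge c b with h2 | h2
      · simp [not_lt.mpr h, h2]; omega
      · simp [not_lt.mpr h, not_lt.mpr h2]; omega

lemma flen_strict (l : List ℤ) (a b : ℤ) (ha : a ∈ l) (hab : a < b) :
    (l.filter (fun y => decide (y < a))).length < (l.filter (fun y => decide (y < b))).length := by
  induction l with
  | nil => simp at ha
  | cons c t ih =>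
    rcases List.mem_cons.mp ha with rfl | hmem
    · simp only [List.filter]
      simp [lt_irrefl, hab]
      have := flen_mono t a b hab
      omega
    · have := ih hmem
      simp only [List.filter]
      rcases lt_or_ge c a with h | h
      · simp [h, h.trans hab]; omega
      · rcases lt_or_ge c b with h2 | h2
        · simp [not_lt.mpr h, h2]; omega
        · simp [not_lt.mpr h, not_lt.mpr h2]; omega

lemma ht_stdz_take (l : List ℤ) (k : ℕ) : ht ((stdz l).take k) = ht (l.take k) := by
  set f : ℤ → ℤ := fun x => ((l.filter (fun y => decide (y < x))).length : ℤ) + 1 with hfdef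
  have : (stdz l).take k = (l.take k).map f := by
    rw [stdz, List.map_take]
  rw [this]
  apply ht_map
  intro a ha b hb
  have ha' : a ∈ l := List.take_subset k l ha
  have hb' : b ∈ l := List.take_subset k l hb
  have key : ∀ x y : ℤ, x ∈ l → x < y → f x < f y := by
    intro x y hx hxy
    have := flen_strict l x y hx hxy
    simp only [hfdef]
    omega
  rcases lt_trichotomy a b with h | h | h
  · have h2 := key a b ha' h
    simp [sgn, h, h2, lt_asymm h, lt_asymm h2]
  · subst h; simp [sgn]
  · have h2 := key b a hb' h
    simp [sgn, h, h2, lt_asymm h, lt_asymm h2]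

/-- If std(ρ), std(τ) are ballot, ρτ is a permutation of {1,…,n}, ρ has length l ≥ 1,
τ is nonempty and ρ₁ > τ₁, then l+1 is the first lowest position of π = ρʳτ. -/
theorem first_lowest_position (n l : ℕ) (ρ τ : List ℤ)
    (hlen : ρ.length = l) (hl : 1 ≤ l) (hτ : τ ≠ [])
    (hρb : IsBallot (stdz ρ)) (hτb : IsBallot (stdz τ))
    (hperm : (ρ ++ τ).Perm (baseList n))
    (hheads : τ.headI < ρ.headI) :
    (∀ i : ℕ, 1 ≤ i → i ≤ n →
        ht ((ρ.reverse ++ τ).take (l + 1)) ≤ ht ((ρ.reverse ++ τ).take i)) ∧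
    (∀ i : ℕ, 1 ≤ i → i < l + 1 →
        ht ((ρ.reverse ++ τ).take (l + 1)) < ht ((ρ.reverse ++ τ).take i)) := by
  subst hlen
  set l := ρ.length with hldef
  have hρne : ρ ≠ [] := by
    intro h; rw [h] at hldef; simp [hldef] at hl
  have hS : ∀ k, 0 ≤ ht (ρ.take k) := fun k => by
    rw [← ht_stdz_take]; exact hρb k
  have hT : ∀ k, 0 ≤ ht (τ.take k) := fun k => by
    rw [← ht_stdz_take]; exact hτb k
  have hrevlen : ρ.reverse.length = l := by simp [hldef]
  have hsgn : sgn ρ.headI τ.headI = -1 := by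
    simp [sgn, lt_asymm hheads, hheads]
  -- formula for positions l + j, j ≥ 1
  have key2 : ∀ j : ℕ, 1 ≤ j →
      ht ((ρ.reverse ++ τ).take (l + j)) = -ht ρ - 1 + ht (τ.take j) := by
    intro j hj
    obtain ⟨j', rfl⟩ : ∃ j', j = j' + 1 := ⟨j - 1, by omega⟩
    rw [List.take_append, hrevlen,
      List.take_of_length_le (by omega : ρ.reverse.length ≤ l + (j' + 1))]
    have harith : l + (j' + 1) - l = j' + 1 := by omega
    rw [harith, ht_append _ _ (by simp [hρne]) (take_ne_nil τ j' hτ),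
      List.reverse_reverse, headI_take, ht_reverse, hsgn]
    ring
  have hH1 : ht ((ρ.reverse ++ τ).take (l + 1)) = -ht ρ - 1 := by
    rw [key2 1 le_rfl]
    have : ht (τ.take 1) = 0 := by
      cases τ
      · simp [ht_nil]
      · simp [ht_single]
    rw [this]; ring
  -- formula for positions 1 ≤ i ≤ l
  have key1 : ∀ i : ℕ, 1 ≤ i → i ≤ l →
      ht ((ρ.reverse ++ τ).take i) = ht (ρ.take (l - i + 1)) - ht ρ := by
    intro i h1 h2
    rw [List.take_append, hrevlen]
    have : i - l = 0 := by omega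
    rw [this, List.take_zero, List.append_nil, List.take_reverse, ht_reverse,
      ht_drop ρ (ρ.length - i) (by omega)]
    have : ρ.length - i + 1 = l - i + 1 := rfl
    rw [this]; ring
  constructor
  · intro i h1 _
    rcases le_or_gt i l with hi | hi
    · rw [hH1, key1 i h1 hi]
      have := hS (l - i + 1)
      linarith
    · have : l + (i - l) = i := by omega
      rw [hH1, ← this, key2 (i - l) (by omega)]
      have := hT (i - l)
      linarith
  · intro i h1 h2
    have hi : i ≤ l := by omega
    rw [hH1, key1 i h1 hi]
    have := hS (l - i + 1)
    linarith
end

section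
/- For words ρ, τ on distinct integers with ρτ a permutation of {1,…,n}, the number of peaks of the concatenation ρʳτ, when position |ρ| or |ρ|+1 is a lowest position of ρʳτ as in the reversal-concatenation setup (std(ρ), std(τ) ballot), satisfies pk(ρʳτ) = pk(ρ) + pk(τ). -/
open scoped Classical

/- ---------- auxiliary lemmas ---------- -/

lemma peaks_cons (x y z : ℤ) (t : List ℤ) :
    peaks (x :: y :: z :: t) = (if x < y ∧ z < y then 1 else 0) + peaks (y :: z :: t) := by
  simp only [peaks, List.tail_cons, List.zip_cons_cons, List.filter_cons]
  split_ifs <;> simp_all <;> omega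

lemma peaks_short (l : List ℤ) (h : l.length ≤ 2) : peaks l = 0 := by
  match l with
  | [] => simp [peaks]
  | [x] => simp [peaks]
  | [x, y] => simp [peaks]
  | x :: y :: z :: t => simp at h

def ind2 (x : ℤ) (l : List ℤ) : ℕ :=
  match l with
  | y :: z :: _ => if x < y ∧ z < y then 1 else 0
  | _ => 0

lemma peaks_cons_take (x : ℤ) (l : List ℤ) :
    peaks (x :: l) = peaks l + ind2 x (l.take 2) := by
  match l with
  | [] => simp [peaks, ind2]
  | [y] => simp [peaks, ind2]
  | y :: z :: t => rw [peaks_cons]; simp [ind2]; omega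

lemma peaks_concat (t : List ℤ) (a b x : ℤ) :
    peaks (t ++ [a, b] ++ [x]) = peaks (t ++ [a, b]) + (if a < b ∧ x < b then 1 else 0) := by
  induction t with
  | nil =>
    simp only [List.nil_append]
    rw [show ([a,b] ++ [x] : List ℤ) = [a,b,x] by rfl, peaks_cons,
      peaks_short [b,x] (by simp), peaks_short [a,b] (by simp)]
    omega
  | cons y t ih =>
    have h1 : (y :: t) ++ [a, b] ++ [x] = y :: (t ++ [a, b] ++ [x]) := by simp
    have h2 : (y :: t) ++ [a, b] = y :: (t ++ [a, b]) := by simp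
    rw [h1, h2, peaks_cons_take, peaks_cons_take, ih]
    have htake : (t ++ [a, b] ++ [x]).take 2 = (t ++ [a, b]).take 2 :=
      List.take_append_of_le_length (by simp)
    rw [htake]
    omega

lemma peaks_reverse (l : List ℤ) : peaks l.reverse = peaks l := by
  induction l with
  | nil => rfl
  | cons x l ih =>
    match l, ih with
    | [], _ => rfl
    | [y], _ => simp [peaks]
    | y :: z :: t, ih =>
      have h1 : (x :: y :: z :: t).reverse = (y :: z :: t).reverse ++ [x] := by simp
      have h2 : (y :: z :: t).reverse = t.reverse ++ [z, y] := by simp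
      rw [h1, h2, peaks_concat, ← h2, ih, peaks_cons]
      have : (z < y ∧ x < y) ↔ (x < y ∧ z < y) := by tauto
      simp only [this]
      omega

lemma peaks_append (a b : List ℤ)
    (h1 : ∀ t v w, a = t ++ [v, w] → ¬ v < w)
    (h2 : ∀ y z t, b = y :: z :: t → ¬ z < y) :
    peaks (a ++ b) = peaks a + peaks b := by
  induction a with
  | nil => simp [peaks]
  | cons x a ih =>
    match a with
    | [] =>
      match b with
      | [] => simp [peaks]
      | [y] => simp [peaks]
      | y :: z :: t =>
        have h := h2 y z t rfl
        simp only [List.nil_append, List.cons_append, peaks_cons]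
        rw [peaks_short [x] (by simp)]
        simp [h]
    | [u] =>
      match b with
      | [] => simp [peaks_short]
      | [y] =>
        have hxu := h1 [] x u rfl
        show peaks [x,u,y] = peaks [x,u] + peaks [y]
        rw [peaks_cons, peaks_short [u,y] (by simp), peaks_short [x,u] (by simp),
          peaks_short [y] (by simp)]
        simp [hxu]
      | y :: z :: t =>
        have hxu := h1 [] x u rfl
        have hyz := h2 y z t rfl
        simp only [List.cons_append, List.nil_append, peaks_cons]
        rw [peaks_short [x,u] (by simp)]
        simp [hxu, hyz]
    | u :: v :: s =>
      have h1' : ∀ t v' w, u :: v :: s = t ++ [v', w] → ¬ v' < w := by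
        intro t v' w ht
        exact h1 (x :: t) v' w (by rw [List.cons_append, ht])
      have ihh := ih h1'
      have hfact : (u :: v :: s) ++ b = u :: v :: (s ++ b) := by simp
      rw [List.cons_append, hfact, peaks_cons, ← hfact, ihh, peaks_cons]
      omega

lemma filter_lt_length_lt (l : List ℤ) (v w : ℤ) (hv : v ∈ l) (hvw : v < w) :
    (l.filter (fun y => decide (y < v))).length < (l.filter (fun y => decide (y < w))).length := by
  have hsub : List.Sublist (l.filter (fun y => decide (y < v)))
      (l.filter (fun y => decide (y < w))) :=
    List.monotone_filter_right l (by intro y hy; simp at hy ⊢; omega)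
  refine lt_of_le_of_ne hsub.length_le ?_
  intro heq
  have := hsub.eq_of_length heq
  have hmem : v ∈ l.filter (fun y => decide (y < w)) := by simp [hv, hvw]
  rw [← this] at hmem
  simp at hmem

lemma ht_pair (a b : ℤ) :
    ht [a, b] = (if a < b then 1 else 0) - (if b < a then 1 else 0) := by
  simp only [ht, ascents, descents, List.tail_cons, List.zip_cons_cons, List.zip_nil_right,
    List.filter_cons, List.filter_nil]
  split_ifs <;> simp_all <;> omega

lemma head_lt_of_ballot (w v : ℤ) (s : List ℤ) (hnd : (w :: v :: s).Nodup)
    (hb : IsBallot (stdz (w :: v :: s))) : w < v := by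
  have hwv : w ≠ v := by simp at hnd; tauto
  by_contra hlt
  have hvw : v < w := lt_of_le_of_ne (not_lt.mp hlt) (Ne.symm hwv)
  have hlen := filter_lt_length_lt (w :: v :: s) v w (by simp) hvw
  have h2 := hb 2
  have htake : (stdz (w :: v :: s)).take 2 =
      [(((w :: v :: s).filter (fun y => decide (y < w))).length : ℤ) + 1,
       (((w :: v :: s).filter (fun y => decide (y < v))).length : ℤ) + 1] := by
    simp only [stdz, List.map_cons]
    rfl
  rw [htake, ht_pair] at h2
  rw [if_neg (by omega), if_pos (by omega)] at h2
  omega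

/-- In the reversal-concatenation setup, pk(ρʳτ) = pk(ρ) + pk(τ). -/
theorem peaks_reversal_concatenation (n : ℕ) (ρ τ : List ℤ)
    (hρb : IsBallot (stdz ρ)) (hτb : IsBallot (stdz τ))
    (hperm : (ρ ++ τ).Perm (baseList n)) :
    peaks (ρ.reverse ++ τ) = peaks ρ + peaks τ := by
  have hndbase : (baseList n).Nodup := by
    have h : baseList n = List.map (fun i : ℕ => (i : ℤ) + 1) (List.range n) := by
      simp only [baseList]
      generalize List.range n = l
      induction l with
      | nil => rfl
      | cons a l ih => simp_all
    rw [h]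
    exact List.Nodup.map (fun a b h => by omega) (List.nodup_range (n := n))
  have hnd : (ρ ++ τ).Nodup := hperm.nodup_iff.mpr hndbase
  have hndρ : ρ.Nodup := hnd.sublist (List.sublist_append_left ρ τ)
  have hndτ : τ.Nodup := hnd.sublist (List.sublist_append_right ρ τ)
  rw [peaks_append, peaks_reverse]
  · intro t v w h
    have hρeq : ρ = w :: v :: t.reverse := by
      rw [← List.reverse_reverse ρ, h]
      simp
    have := head_lt_of_ballot w v t.reverse (hρeq ▸ hndρ) (hρeq ▸ hρb)
    omega
  · intro y z t h
    have := head_lt_of_ballot y z t (h ▸ hndτ) (h ▸ hτb)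
    omega
end

section
/- The bivariate exponential generating function for the depth statistic over all permutations satisfies (1+z)·P^{dp}(x,z) − z = B^{des}(xz, 1/z²) · √((1+x)/(1−x)), where P^{dp}(x,z) = Σ_{n≥0} Σ_{π∈S_n} z^{dp(π)} xⁿ/n! and B^{des} is the EGF of ballot permutations by descents, and √((1+x)/(1−x)) = Σ_n b_n xⁿ/n! is the EGF of the ballot permutation counts. -/
open scoped Classical

/-- Coefficient of xⁿ/n! in P^{dp}(x,z). -/
noncomputable def Pdp (n : ℕ) (z : ℝ) : ℝ :=
  ∑ σ : Equiv.Perm (Fin n), z ^ (depth (permList σ)).toNat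

/-- Coefficient of xⁿ/n! in B^{des}(x,t). -/
noncomputable def Bdes (n : ℕ) (t : ℝ) : ℝ :=
  ∑ σ : Equiv.Perm (Fin n),
    if IsBallot (permList σ) then t ^ descents (permList σ) else 0

/-- Number of ballot permutations of length n. -/
noncomputable def bcount (n : ℕ) : ℕ :=
  Nat.card {σ : Equiv.Perm (Fin n) // IsBallot (permList σ)}

def stp (p : ℤ × ℤ) : ℤ := if p.1 < p.2 then 1 else if p.2 < p.1 then -1 else 0
def steps (l : List ℤ) : List ℤ := (l.zip l.tail).map stp

lemma stp_mem (p : ℤ × ℤ) : stp p = 1 ∨ stp p = -1 ∨ stp p = 0 := by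
  unfold stp; split_ifs <;> simp

lemma stp_eq_one_iff {p : ℤ × ℤ} : stp p = 1 ↔ p.1 < p.2 := by
  unfold stp; split_ifs with h1 h2 <;> simp_all

lemma stp_eq_negone_iff {p : ℤ × ℤ} : stp p = -1 ↔ p.2 < p.1 := by
  unfold stp; split_ifs with h1 h2 <;> simp_all
  omega

lemma ascents_eq (l : List ℤ) : ascents l = ((steps l).filter (fun x => decide (x = 1))).length := by
  unfold ascents steps
  rw [List.filter_map, List.length_map]
  congr 1
  apply List.filter_congr
  intro p _
  simp [Function.comp, stp_eq_one_iff]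

lemma descents_eq (l : List ℤ) : descents l = ((steps l).filter (fun x => decide (x = -1))).length := by
  unfold descents steps
  rw [List.filter_map, List.length_map]
  congr 1
  apply List.filter_congr
  intro p _
  simp [Function.comp, stp_eq_negone_iff]

lemma sum_eq_counts (s : List ℤ) (hs : ∀ x ∈ s, x = 1 ∨ x = -1 ∨ x = 0) :
    s.sum = ((s.filter (fun x => decide (x = 1))).length : ℤ)
      - ((s.filter (fun x => decide (x = -1))).length : ℤ) := by
  induction s with
  | nil => simp
  | cons a t ih =>
    have ha := hs a (by simp)
    have ht' := ih (fun x hx => hs x (by simp [hx]))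
    rcases ha with h | h | h <;>
      simp [List.filter_cons, h, ht'] <;> push_cast <;> ring

lemma ht_eq_sum (l : List ℤ) : ht l = (steps l).sum := by
  rw [ht, ascents_eq, descents_eq, sum_eq_counts]
  intro x hx
  simp only [steps, List.mem_map] at hx
  obtain ⟨p, _, rfl⟩ := hx
  exact stp_mem p

lemma steps_cons_cons (a b : ℤ) (t : List ℤ) :
    steps (a :: b :: t) = stp (a, b) :: steps (b :: t) := rfl

lemma steps_length (l : List ℤ) : (steps l).length = l.length - 1 := by
  unfold steps
  rw [List.length_map, List.length_zip, List.length_tail]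
  omega

lemma steps_take (l : List ℤ) (k : ℕ) : steps (l.take (k + 1)) = (steps l).take k := by
  induction l generalizing k with
  | nil => simp [steps]
  | cons a t ih =>
    cases t with
    | nil => cases k <;> simp [steps]
    | cons b t' =>
      cases k with
      | zero => simp [steps]
      | succ k' =>
        rw [List.take_succ_cons, List.take_succ_cons, steps_cons_cons]
        rw [show (b :: List.take k' t') = List.take (k'+1) (b :: t') from rfl]
        rw [ih, steps_cons_cons, List.take_succ_cons]

lemma steps_drop (l : List ℤ) (c : ℕ) : steps (l.drop c) = (steps l).drop c := by
  induction c generalizing l with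
  | zero => simp
  | succ c' ih =>
    cases l with
    | nil => simp [steps]
    | cons a t =>
      rw [List.drop_succ_cons, ih]
      cases t with
      | nil => simp [steps]
      | cons b t' => rw [steps_cons_cons, List.drop_succ_cons]

lemma steps_getElem (l : List ℤ) (i : ℕ) (h : i < (steps l).length) :
    (steps l)[i] = stp (l[i]'(by rw [steps_length] at h; omega),
                        l[i+1]'(by rw [steps_length] at h; omega)) := by
  unfold steps at h ⊢
  rw [List.getElem_map, List.getElem_zip, List.getElem_tail]


lemma stp_swap (a b : ℤ) : stp (b, a) = -stp (a, b) := by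
  unfold stp
  split_ifs <;> omega

lemma steps_nil : steps ([] : List ℤ) = [] := rfl

lemma steps_single (a : ℤ) : steps [a] = [] := rfl

lemma steps_cons (a : ℤ) (t : List ℤ) (h : t ≠ []) :
    steps (a :: t) = stp (a, t.head h) :: steps t := by
  cases t with
  | nil => simp at h
  | cons b t' => rw [steps_cons_cons]; rfl

lemma steps_concat (t : List ℤ) (a : ℤ) (h : t ≠ []) :
    steps (t ++ [a]) = steps t ++ [stp (t.getLast h, a)] := by
  induction t with
  | nil => simp at h
  | cons b t' ih =>
    cases t' with
    | nil => simp [steps_cons_cons, steps_single, steps_nil]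
    | cons c t'' =>
      rw [List.cons_append, show (c :: t'') ++ [a] = c :: (t'' ++ [a]) from rfl,
        steps_cons_cons, show c :: (t'' ++ [a]) = (c :: t'') ++ [a] from rfl,
        ih (by simp), steps_cons_cons]
      simp [List.getLast_cons]

lemma steps_reverse (l : List ℤ) : steps l.reverse = ((steps l).map (fun x => -x)).reverse := by
  induction l with
  | nil => simp [steps_nil]
  | cons a t ih =>
    cases t with
    | nil => simp [steps_single]
    | cons b t' =>
      have hrev : (b :: t').reverse ≠ [] := by simp
      rw [List.reverse_cons, steps_concat _ _ hrev, ih, steps_cons_cons]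
      rw [List.getLast_reverse]
      simp only [List.head_cons, List.map_cons, List.reverse_cons]
      rw [stp_swap]

noncomputable def psum (l : List ℤ) (i : ℕ) : ℤ := ((steps l).take i).sum

lemma psum_zero (l : List ℤ) : psum l 0 = 0 := by simp [psum]

lemma ht_take_succ (l : List ℤ) (i : ℕ) : ht (l.take (i + 1)) = psum l i := by
  rw [ht_eq_sum, steps_take]; rfl

lemma isBallot_iff (l : List ℤ) : IsBallot l ↔ ∀ i : ℕ, 0 ≤ psum l i := by
  constructor
  · intro h i; rw [← ht_take_succ]; exact h (i + 1)
  · intro h k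
    cases k with
    | zero => simp [ht_nil]
    | succ j => rw [ht_take_succ]; exact h j

lemma foldr_min_le_init (L : List ℤ) : L.foldr min 0 ≤ 0 := by
  induction L with
  | nil => simp
  | cons a t ih => simpa using Or.inr ih

lemma foldr_min_le (L : List ℤ) {x : ℤ} (hx : x ∈ L) : L.foldr min 0 ≤ x := by
  induction L with
  | nil => simp at hx
  | cons a t ih =>
    rcases List.mem_cons.mp hx with rfl | hx
    · simp
    · simpa using Or.inr (ih hx)

lemma foldr_min_mem (L : List ℤ) : L.foldr min 0 = 0 ∨ L.foldr min 0 ∈ L := by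
  induction L with
  | nil => simp
  | cons a t ih =>
    rcases le_total a (t.foldr min 0) with h | h
    · right
      rw [List.foldr_cons, min_eq_left h]
      exact List.mem_cons_self
    · rw [List.foldr_cons, min_eq_right h]
      rcases ih with h0 | hm
      · exact Or.inl h0
      · exact Or.inr (List.mem_cons_of_mem _ hm)

lemma sum_map_neg' (x : List ℤ) : (x.map (fun a => -a)).sum = -x.sum := by
  induction x with
  | nil => simp
  | cons a t ih => simp [ih]; ring

lemma depth_nonneg (l : List ℤ) : 0 ≤ depth l := by
  unfold depth; simpa using foldr_min_le_init _

lemma depth_le (l : List ℤ) {i : ℕ} (hi : i < l.length) : -(depth l) ≤ psum l i := by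
  unfold depth
  rw [neg_neg]
  apply foldr_min_le
  rw [← ht_take_succ]
  exact List.mem_map.mpr ⟨i, List.mem_range.mpr hi, rfl⟩

lemma depth_exists (l : List ℤ) (hl : l ≠ []) : ∃ i < l.length, psum l i = -(depth l) := by
  have hn : 0 < l.length := List.length_pos_iff.mpr hl
  unfold depth
  rw [neg_neg]
  rcases foldr_min_mem ((List.range l.length).map (fun i => ht (l.take (i + 1)))) with h0 | hm
  · exact ⟨0, hn, by rw [psum_zero, h0]⟩
  · obtain ⟨i, hi, he⟩ := List.mem_map.mp hm
    exact ⟨i, List.mem_range.mp hi, by rw [← he, ht_take_succ]⟩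

lemma sum_take_map_neg (x : List ℤ) (k : ℕ) :
    (((x.map (fun a => -a))).take k).sum = -((x.take k).sum) := by
  rw [← List.map_take, sum_map_neg']

lemma sum_take_reverse (y : List ℤ) (j : ℕ) (hj : j ≤ y.length) :
    ((y.reverse).take j).sum = y.sum - ((y.take (y.length - j)).sum) := by
  rw [List.take_reverse, List.sum_reverse]
  have hs : (y.take (y.length - j)).sum + (y.drop (y.length - j)).sum = y.sum := by
    rw [← List.sum_append, List.take_append_drop]
  linarith

lemma ballot_reverse_iff (t : List ℤ) :
    IsBallot t.reverse ↔ ∀ i : ℕ, (steps t).sum ≤ ((steps t).take i).sum := by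
  set s := steps t with hs
  have hsu : steps t.reverse = (s.map (fun x => -x)).reverse := steps_reverse t
  have hlen : (s.map (fun x => -x)).reverse.length = s.length := by simp
  have key : ∀ j : ℕ, j ≤ s.length →
      psum t.reverse j = ((s.take (s.length - j)).sum) - s.sum := by
    intro j hj
    unfold psum
    rw [hsu, sum_take_reverse _ _ (by simpa using hj)]
    have h1 : (s.map (fun a => -a)).sum = -s.sum := sum_map_neg' s
    have h2 : ((s.map (fun a => -a)).take ((s.map (fun a => -a)).length - j)).sum
        = -((s.take (s.length - j)).sum) := by
      rw [List.length_map, sum_take_map_neg]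
    rw [h1, h2]
    ring
  rw [isBallot_iff]
  constructor
  · intro h i
    rcases le_or_gt s.length i with hi | hi
    · rw [List.take_of_length_le hi]
    · have := h (s.length - i)
      rw [key _ (by omega)] at this
      have hii : s.length - (s.length - i) = i := by omega
      rw [hii] at this
      linarith
  · intro h j
    rcases le_or_gt j s.length with hj | hj
    · rw [key _ hj]
      have := h (s.length - j)
      linarith
    · have hfull : psum t.reverse j = -s.sum := by
        unfold psum
        rw [hsu, List.take_of_length_le (by simpa using hj.le), List.sum_reverse, sum_map_neg']
      rw [hfull]
      have := h 0
      simp at this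
      linarith

lemma sum_take_drop (s : List ℤ) (c j : ℕ) :
    ((s.drop c).take j).sum = (s.take (c + j)).sum - (s.take c).sum := by
  rcases le_or_gt c s.length with hc | hc
  · have := List.take_add (l := s) (i := c) (j := j)
    have h2 : (s.take (c + j)).sum = (s.take c).sum + ((s.drop c).take j).sum := by
      rw [this, List.sum_append]
    linarith
  · rw [List.drop_of_length_le hc.le]
    rw [List.take_of_length_le (show s.length ≤ c + j by omega),
      List.take_of_length_le (show s.length ≤ c by omega)]
    simp

lemma ballot_drop_iff (w : List ℤ) (c : ℕ) :
    IsBallot (w.drop c) ↔ ∀ j : ℕ, ((steps w).take c).sum ≤ ((steps w).take (c + j)).sum := by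
  rw [isBallot_iff]
  constructor
  · intro h j
    have := h j
    unfold psum at this
    rw [steps_drop, sum_take_drop] at this
    linarith
  · intro h j
    unfold psum
    rw [steps_drop, sum_take_drop]
    have := h j
    linarith

-- step values are ±1 for nodup words
lemma steps_pm {w : List ℤ} (hw : w.Nodup) {i : ℕ} (hi : i < (steps w).length) :
    (steps w)[i] = 1 ∨ (steps w)[i] = -1 := by
  rw [steps_getElem]
  have h1 : i < w.length := by rw [steps_length] at hi; omega
  have h2 : i + 1 < w.length := by rw [steps_length] at hi; omega
  have hne : w[i] ≠ w[i+1] := by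
    intro h
    have := (List.Nodup.getElem_inj_iff hw).mp h
    omega
  rcases lt_trichotomy (w[i]'h1) (w[i+1]'h2) with h | h | h
  · left; exact stp_eq_one_iff.mpr h
  · exact absurd h hne
  · right; exact stp_eq_negone_iff.mpr h

lemma psum_succ (w : List ℤ) (i : ℕ) (hi : i < (steps w).length) :
    psum w (i + 1) = psum w i + (steps w)[i] := by
  unfold psum
  exact List.sum_take_succ _ _ hi

lemma psum_sat (w : List ℤ) {k : ℕ} (hk : (steps w).length ≤ k) :
    psum w k = psum w (steps w).length := by
  unfold psum
  rw [List.take_of_length_le hk, List.take_length]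

lemma ballot_rev_take_iff (w : List ℤ) (c : ℕ) (hc : 1 ≤ c) :
    IsBallot ((w.take c).reverse) ↔ ∀ i ≤ c - 1, psum w (c - 1) ≤ psum w i := by
  rw [ballot_reverse_iff]
  have hst : steps (w.take c) = (steps w).take (c - 1) := by
    have h1 : steps (w.take ((c - 1) + 1)) = (steps w).take (c - 1) := steps_take w (c - 1)
    have h2 : (c - 1) + 1 = c := by omega
    rwa [h2] at h1
  rw [hst]
  constructor
  · intro h i hi
    have := h i
    rw [List.take_take, min_eq_left hi] at this
    simpa [psum] using this
  · intro h i
    have := h (min i (c - 1)) (min_le_right _ _)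
    rw [List.take_take]
    simpa [psum] using this


lemma isBallot_nil : IsBallot ([] : List ℤ) := by
  intro k; simp [ht_nil]

def ValidCut (w : List ℤ) (c : ℕ) : Prop :=
  IsBallot ((w.take c).reverse) ∧ IsBallot (w.drop c)

noncomputable def cutF (w : List ℤ) : Finset ℕ :=
  (Finset.range w.length).filter (fun i => psum w i = -(depth w))

lemma mem_cutF {w : List ℤ} {i : ℕ} :
    i ∈ cutF w ↔ i < w.length ∧ psum w i = -(depth w) := by
  simp [cutF]

lemma cutF_nonempty {w : List ℤ} (hne : w ≠ []) : (cutF w).Nonempty := by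
  obtain ⟨i, hi, he⟩ := depth_exists w hne
  exact ⟨i, mem_cutF.mpr ⟨hi, he⟩⟩

lemma psum_lb {w : List ℤ} (hne : w ≠ []) (i : ℕ) : -(depth w) ≤ psum w i := by
  have hn : 0 < w.length := List.length_pos_iff.mpr hne
  rcases lt_or_ge i w.length with h | h
  · exact depth_le w h
  · have hs : (steps w).length = w.length - 1 := steps_length w
    rw [psum_sat w (by omega)]
    rw [hs]
    exact depth_le w (by omega)


lemma psum_first {w : List ℤ} (hF : (cutF w).Nonempty) {i : ℕ} (hi : i < (cutF w).min' hF)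
    (hin : i < w.length) : -(depth w) + 1 ≤ psum w i := by
  have h1 : -(depth w) ≤ psum w i := depth_le w hin
  have h2 : psum w i ≠ -(depth w) := by
    intro h
    have : (cutF w).min' hF ≤ i := Finset.min'_le _ _ (mem_cutF.mpr ⟨hin, h⟩)
    omega
  omega

lemma psum_last {w : List ℤ} (hF : (cutF w).Nonempty) {i : ℕ} (hi : (cutF w).max' hF < i)
    (hin : i < w.length) : -(depth w) + 1 ≤ psum w i := by
  have h1 : -(depth w) ≤ psum w i := depth_le w hin
  have h2 : psum w i ≠ -(depth w) := by
    intro h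
    have : i ≤ (cutF w).max' hF := Finset.le_max' _ _ (mem_cutF.mpr ⟨hin, h⟩)
    omega
  omega

theorem validCut_iff {w : List ℤ} (hw : w.Nodup) (hne : w ≠ []) (hF : (cutF w).Nonempty)
    {c : ℕ} (hc : c ≤ w.length) :
    ValidCut w c ↔ (c = (cutF w).min' hF ∨ c = (cutF w).max' hF + 1) := by
  have hn : 0 < w.length := List.length_pos_iff.mpr hne
  have hmnF := mem_cutF.mp ((cutF w).min'_mem hF)
  have hmxF := mem_cutF.mp ((cutF w).max'_mem hF)
  set n := w.length with hnn
  set d := depth w with hdd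
  set mn := (cutF w).min' hF with hmn'
  set mx := (cutF w).max' hF with hmx'
  have hsl : (steps w).length = n - 1 := steps_length w
  have hlb := psum_lb hne
  constructor
  · rintro ⟨hA, hB⟩
    rw [ballot_drop_iff] at hB
    have hB' : ∀ j : ℕ, psum w c ≤ psum w (c + j) := hB
    rcases Nat.eq_zero_or_pos c with rfl | hc1
    · -- c = 0 : show d = 0 and mn = 0
      left
      have hd0 : (0:ℤ) ≤ -d := by
        have h := hB' mn
        rw [psum_zero] at h
        simp only [zero_add] at h
        rw [← hmnF.2]
        exact h
      have hd : d = 0 := by have := depth_nonneg w; omega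
      have h0F : (0:ℕ) ∈ cutF w := mem_cutF.mpr ⟨hn, by rw [psum_zero, ← hdd, hd]; ring⟩
      have := Finset.min'_le _ _ h0F
      omega
    · have hA' : ∀ i ≤ c - 1, psum w (c - 1) ≤ psum w i :=
        (ballot_rev_take_iff w c hc1).mp hA
      rcases eq_or_lt_of_le hc with hcn | hcn
      · -- c = n : show c = mx + 1
        right
        have h1 : psum w (c-1) ≤ -d := by
          rw [← hmxF.2]
          exact hA' mx (by omega)
        have h2 : -d ≤ psum w (c-1) := hlb _
        have hcF : c - 1 ∈ cutF w := mem_cutF.mpr ⟨by omega, by omega⟩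
        have h3 : c - 1 ≤ mx := Finset.le_max' _ _ hcF
        have h4 : mx < n := hmxF.1
        omega
      · -- 1 ≤ c < n
        have hidx : c - 1 < (steps w).length := by omega
        have hstep : psum w c = psum w (c-1) + (steps w)[c-1] := by
          have := psum_succ w (c-1) hidx
          have he : c - 1 + 1 = c := by omega
          rwa [he] at this
        rcases steps_pm hw hidx with hs1 | hs1
        · -- ascent into c : c = mx + 1
          right
          have hnot : ¬ c ≤ mx := by
            intro hle
            have h5 : psum w c ≤ psum w mx := by
              have := hB' (mx - c)
              have he : c + (mx - c) = mx := by omega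
              rwa [he] at this
            have h6 : psum w (c-1) = psum w c - 1 := by rw [hstep, hs1]; ring
            have h7 := hlb (c-1)
            rw [hmxF.2] at h5
            omega
          have h8 : psum w (c-1) ≤ -d := by
            rw [← hmxF.2]
            exact hA' mx (by omega)
          have h9 := hlb (c-1)
          have hcF : c - 1 ∈ cutF w := mem_cutF.mpr ⟨by omega, by omega⟩
          have := Finset.le_max' _ _ hcF
          omega
        · -- descent into c : c = mn
          left
          have hnot : ¬ mn ≤ c - 1 := by
            intro hle
            have h5 : psum w (c-1) ≤ psum w mn := hA' mn hle
            rw [hmnF.2] at h5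
            have h6 : psum w c = psum w (c-1) - 1 := by rw [hstep, hs1]; ring
            have h7 := hlb c
            omega
          have h8 : psum w c ≤ -d := by
            rw [← hmnF.2]
            have := hB' (mn - c)
            have he : c + (mn - c) = mn := by omega
            rwa [he] at this
          have h9 := hlb c
          have hcF : c ∈ cutF w := mem_cutF.mpr ⟨by omega, by omega⟩
          have := Finset.min'_le _ _ hcF
          omega
  · rintro (rfl | rfl)
    · -- c = mn is a valid cut
      constructor
      · rcases Nat.eq_zero_or_pos mn with hmn0 | hmn1
        · rw [hmn0]
          simpa using isBallot_nil
        · rw [ballot_rev_take_iff w mn hmn1]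
          intro i hi
          have hidx : mn - 1 < (steps w).length := by have := hmnF.1; omega
          have hstep : psum w mn = psum w (mn-1) + (steps w)[mn-1] := by
            have := psum_succ w (mn-1) hidx
            have he : mn - 1 + 1 = mn := by omega
            rwa [he] at this
          have hfirst : -d + 1 ≤ psum w (mn - 1) :=
            psum_first hF (by omega) (by omega)
          have hpm1 : psum w (mn - 1) = -d + 1 := by
            rcases steps_pm hw hidx with h | h <;> rw [h] at hstep <;>
              [skip; omega]
            · exfalso
              have := hmnF.2
              omega
          rw [hpm1]
          rcases Nat.eq_zero_or_pos i with rfl | hi1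
          · rw [psum_zero]
            have hd0 : 0 ≤ d := depth_nonneg w
            by_cases hd : d = 0
            · -- then psum 0 = 0 = -d would give mn = 0, contradiction
              exfalso
              have h0F : (0:ℕ) ∈ cutF w := mem_cutF.mpr ⟨hn, by rw [psum_zero, ← hdd, hd]; ring⟩
              have := Finset.min'_le _ _ h0F
              omega
            · omega
          · rcases eq_or_lt_of_le hi with rfl | hlt
            · omega
            · have := psum_first hF (show i < mn by omega) (by omega)
              omega
      · rw [ballot_drop_iff]
        intro j
        have h1 : psum w mn = -d := hmnF.2
        have h2 := hlb (mn + j)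
        have : psum w mn ≤ psum w (mn + j) := by omega
        exact this
    · -- c = mx + 1 is a valid cut
      constructor
      · rw [ballot_rev_take_iff w (mx+1) (by omega)]
        intro i hi
        simp only [Nat.add_sub_cancel]
        rw [hmxF.2]
        exact hlb i
      · rw [ballot_drop_iff]
        intro j
        show psum w (mx+1) ≤ psum w (mx+1+j)
        rcases le_or_gt n (mx+1) with hbig | hsmall
        · -- mx = n - 1, everything saturates
          have hs1 : psum w (mx+1) = psum w (n-1) := by
            rw [psum_sat w (by omega), hsl]
          have hs2 : psum w (mx+1+j) = psum w (n-1) := by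
            rw [psum_sat w (by omega), hsl]
          omega
        · have hidx : mx < (steps w).length := by omega
          have hstep : psum w (mx+1) = psum w mx + (steps w)[mx] := psum_succ w mx hidx
          have hl : -d + 1 ≤ psum w (mx+1) := psum_last hF (by omega) (by omega)
          have hval : psum w (mx+1) = -d + 1 := by
            rcases steps_pm hw hidx with h | h <;> rw [h] at hstep <;> rw [hmxF.2] at hstep <;> omega
          rw [hval]
          rcases le_or_gt n (mx+1+j) with hb | hb
          · have hs2 : psum w (mx+1+j) = psum w (n-1) := by
              rw [psum_sat w (by omega), hsl]
            rw [hs2]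
            exact psum_last hF (by omega) (by omega)
          · exact psum_last hF (by omega) (by omega)

-- ===== weights =====

lemma steps_mem_pm {u : List ℤ} (hu : u.Nodup) {x : ℤ} (hx : x ∈ steps u) :
    x = 1 ∨ x = -1 := by
  obtain ⟨i, hi, rfl⟩ := List.mem_iff_getElem.mp hx
  exact steps_pm hu hi

lemma length_filter_pm (s : List ℤ) (hs : ∀ x ∈ s, x = 1 ∨ x = -1) :
    s.length = ((s.filter (fun x => decide (x = 1))).length)
      + ((s.filter (fun x => decide (x = -1))).length) := by
  induction s with
  | nil => simp
  | cons a t ih =>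
    have ha := hs a (by simp)
    have ih' := ih (fun x hx => hs x (by simp [hx]))
    rcases ha with h | h <;> subst h <;>
      simp [List.filter_cons, ih'] <;> omega

lemma ballot_ht_nonneg {u : List ℤ} (hu : IsBallot u) : 0 ≤ ht u := by
  have := hu u.length
  rwa [List.take_length] at this

lemma length_eq_ht_des {u : List ℤ} (hu : u.Nodup) (hb : IsBallot u) (hne : u ≠ []) :
    u.length = (ht u).toNat + 1 + 2 * descents u := by
  have h1 : (steps u).length = u.length - 1 := steps_length u
  have h2 := length_filter_pm (steps u) (fun x hx => steps_mem_pm hu hx)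
  have h3 : ht u = ((steps u).filter (fun x => decide (x = 1))).length
      - (((steps u).filter (fun x => decide (x = -1))).length : ℤ) := by
    rw [ht, ascents_eq, descents_eq]
  have h4 : descents u = ((steps u).filter (fun x => decide (x = -1))).length := descents_eq u
  have h5 : 0 ≤ ht u := ballot_ht_nonneg hb
  have h6 : 0 < u.length := List.length_pos_iff.mpr hne
  omega

lemma ht_rev_take (w : List ℤ) {c : ℕ} (hc : 1 ≤ c) :
    ht ((w.take c).reverse) = -(psum w (c - 1)) := by
  rw [ht_eq_sum, steps_reverse, List.sum_reverse, sum_map_neg']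
  have h1 : steps (w.take ((c - 1) + 1)) = (steps w).take (c - 1) := steps_take w (c - 1)
  have h2 : (c - 1) + 1 = c := by omega
  rw [h2] at h1
  rw [h1]
  rfl

lemma weight_eq {z : ℝ} (hz : z ≠ 0) {u : List ℤ} (hu : u.Nodup) (hb : IsBallot u)
    (hne : u ≠ []) :
    z ^ u.length * (1 / z ^ 2) ^ descents u = z ^ ((ht u).toNat + 1) := by
  have hlen := length_eq_ht_des hu hb hne
  rw [hlen, pow_add, pow_mul]
  field_simp
  rw [← mul_pow, mul_one_div_cancel (pow_ne_zero 2 hz), one_pow]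

lemma nodup_rev_take {w : List ℤ} (hw : w.Nodup) (c : ℕ) : ((w.take c).reverse).Nodup :=
  (List.nodup_reverse).mpr ((hw.sublist (List.take_sublist c w)))

theorem sum_cuts {z : ℝ} (hz : z ≠ 0) {w : List ℤ} (hw : w.Nodup) (hne : w ≠ []) :
    ∑ c ∈ Finset.range (w.length + 1),
      (if ValidCut w c then z ^ c * (1 / z ^ 2) ^ descents ((w.take c).reverse) else 0)
    = z ^ (depth w).toNat + z ^ ((depth w).toNat + 1) := by
  have hn : 0 < w.length := List.length_pos_iff.mpr hne
  have hF : (cutF w).Nonempty := cutF_nonempty hne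
  have hmnF := mem_cutF.mp ((cutF w).min'_mem hF)
  have hmxF := mem_cutF.mp ((cutF w).max'_mem hF)
  set n := w.length with hnn
  set d := depth w with hdd
  set mn := (cutF w).min' hF with hmn'
  set mx := (cutF w).max' hF with hmx'
  have hd0 : 0 ≤ d := depth_nonneg w
  have hmnmx : mn ≤ mx := Finset.min'_le _ _ ((cutF w).max'_mem hF)
  have hne' : mn ≠ mx + 1 := by omega
  have hfilter : (Finset.range (n + 1)).filter (fun c => ValidCut w c) = {mn, mx + 1} := by
    ext c
    simp only [Finset.mem_filter, Finset.mem_range, Finset.mem_insert, Finset.mem_singleton]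
    constructor
    · rintro ⟨hcr, hcv⟩
      exact (validCut_iff hw hne hF (by omega)).mp hcv
    · rintro (rfl | rfl)
      · exact ⟨by omega, (validCut_iff hw hne hF (by omega)).mpr (Or.inl rfl)⟩
      · exact ⟨by omega, (validCut_iff hw hne hF (by omega)).mpr (Or.inr rfl)⟩
  have hsum : ∑ c ∈ Finset.range (n + 1),
      (if ValidCut w c then z ^ c * (1 / z ^ 2) ^ descents ((w.take c).reverse) else 0)
      = ∑ c ∈ {mn, mx + 1},
        z ^ c * (1 / z ^ 2) ^ descents ((w.take c).reverse) := by
    rw [← Finset.sum_filter, hfilter]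
  rw [hsum, Finset.sum_pair hne']
  have hterm2 : z ^ (mx+1) * (1 / z ^ 2) ^ descents ((w.take (mx+1)).reverse)
      = z ^ (d.toNat + 1) := by
    have hvalid : ValidCut w (mx+1) := (validCut_iff hw hne hF (by omega)).mpr (Or.inr rfl)
    set u := (w.take (mx+1)).reverse with hu
    have hlenu : u.length = mx + 1 := by
      rw [hu, List.length_reverse, List.length_take]
      omega
    have huneq : u ≠ [] := by
      intro h
      rw [h] at hlenu
      simp at hlenu
    have hw1 := weight_eq hz (nodup_rev_take hw (mx+1)) hvalid.1 huneq
    rw [hlenu] at hw1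
    rw [hw1]
    have hht : ht u = d := by
      rw [hu, ht_rev_take w (by omega : 1 ≤ mx + 1)]
      simp only [Nat.add_sub_cancel]
      rw [hmxF.2]
      ring
    rw [hht]
  have hterm1 : z ^ mn * (1 / z ^ 2) ^ descents ((w.take mn).reverse) = z ^ d.toNat := by
    rcases Nat.eq_zero_or_pos mn with hmn0 | hmn1
    · have hd : d = 0 := by
        have h2 := hmnF.2
        rw [hmn0] at h2
        rw [psum_zero] at h2
        omega
      rw [hmn0, hd]
      have hsnil : steps ([] : List ℤ) = [] := by
        have := steps_length ([] : List ℤ)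
        simpa using this
      have hdes : descents ((w.take 0).reverse) = 0 := by
        rw [List.take_zero, List.reverse_nil, descents_eq, hsnil]
        simp
      rw [hdes]
      simp
    · have hvalid : ValidCut w mn := (validCut_iff hw hne hF (by omega)).mpr (Or.inl rfl)
      set u := (w.take mn).reverse with hu
      have hlenu : u.length = mn := by
        rw [hu, List.length_reverse, List.length_take]
        omega
      have huneq : u ≠ [] := by
        intro h
        rw [h] at hlenu
        simp at hlenu
        omega
      have hw1 := weight_eq hz (nodup_rev_take hw mn) hvalid.1 huneq
      rw [hlenu] at hw1
      rw [hw1]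
      -- compute psum w (mn - 1) = -d + 1
      have hsl : (steps w).length = n - 1 := steps_length w
      have hidx : mn - 1 < (steps w).length := by have := hmnF.1; omega
      have hstep : psum w mn = psum w (mn-1) + (steps w)[mn-1] := by
        have := psum_succ w (mn-1) hidx
        have he : mn - 1 + 1 = mn := by omega
        rwa [he] at this
      have hfirst : -d + 1 ≤ psum w (mn - 1) := psum_first hF (by omega) (by omega)
      have hpm1 : psum w (mn - 1) = -d + 1 := by
        rcases steps_pm hw hidx with h | h <;> rw [h] at hstep <;>
          rw [hmnF.2] at hstep <;> omega
      have hd1 : 1 ≤ d := by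
        have h0 := psum_first hF (show 0 < mn by omega) (by omega)
        rw [psum_zero] at h0
        omega
      have hht : ht u = d - 1 := by
        rw [hu, ht_rev_take w hmn1, hpm1]
        ring
      rw [hht]
      congr 1
      omega
  rw [hterm1, hterm2]

theorem sum_perm_eq (m : ℕ) (L : List ℤ) (hL : L.length = m) (hnd : L.Nodup)
    (F : List ℤ → ℝ) :
    ∑ σ : Equiv.Perm (Fin m), F (List.ofFn (fun i => L[(σ i : ℕ)]'(by rw [hL]; exact (σ i).isLt)))
    = ∑ w ∈ L.permutations.toFinset, F w := by
  subst hL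
  apply Finset.sum_bij (fun (σ : Equiv.Perm (Fin L.length)) _ =>
    List.ofFn (fun i => L[(σ i : ℕ)]'((σ i).isLt)))
  · intro σ _
    rw [List.mem_toFinset, List.mem_permutations]
    have : (List.ofFn (fun i => L[(σ i : ℕ)]'((σ i).isLt))) = List.ofFn (L.get ∘ σ) := by
      congr 1
    rw [this]
    exact (σ.ofFn_comp_perm L.get).trans (by rw [List.ofFn_get])
  · intro σ _ τ _ h
    rw [List.ofFn_inj] at h
    ext i
    have := congrFun h i
    have h2 : (σ i : ℕ) = (τ i : ℕ) := (hnd.getElem_inj_iff).mp this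
    exact_mod_cast h2
  · intro w hw
    rw [List.mem_toFinset, List.mem_permutations] at hw
    have hwl : w.length = L.length := hw.length_eq
    have hwnd : w.Nodup := hw.nodup_iff.mpr hnd
    have hmem : ∀ i : Fin L.length, w[(i : ℕ)]'(by rw [hwl]; exact i.isLt) ∈ L := by
      intro i
      exact hw.mem_iff.mp (List.getElem_mem _)
    set g : Fin L.length → Fin L.length := fun i =>
      ⟨List.idxOf (w[(i : ℕ)]'(by rw [hwl]; exact i.isLt)) L,
        List.idxOf_lt_length_iff.mpr (hmem i)⟩ with hg
    have ginj : Function.Injective g := by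
      intro i j hij
      have h1 : List.idxOf (w[(i : ℕ)]'(by rw [hwl]; exact i.isLt)) L
          = List.idxOf (w[(j : ℕ)]'(by rw [hwl]; exact j.isLt)) L := by
        simpa [hg] using congrArg Fin.val hij
      have h2 := (List.idxOf_inj (hmem i)).mp h1
      have h3 : (i : ℕ) = (j : ℕ) := hwnd.getElem_inj_iff.mp h2
      exact Fin.ext h3
    obtain ⟨gbij⟩ : Function.Bijective g := ⟨ginj, Finite.surjective_of_injective ginj⟩
    refine ⟨Equiv.ofBijective g ⟨ginj, Finite.surjective_of_injective ginj⟩, Finset.mem_univ _, ?_⟩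
    apply List.ext_getElem
    · simp [hwl]
    · intro k h1 h2
      simp only [List.getElem_ofFn]
      show L[(g ⟨k, _⟩ : ℕ)]'_ = w[k]
      simp only [hg]
      exact List.getElem_idxOf _
  · intro σ _
    rfl


-- ===== order-isomorphic words have equal steps =====

lemma stp_congr {a b a' b' : ℤ} (h1 : a < b ↔ a' < b') (h2 : b < a ↔ b' < a') :
    stp (a, b) = stp (a', b') := by
  unfold stp
  split_ifs <;> first | rfl | tauto

lemma steps_congr {u v : List ℤ} (hlen : u.length = v.length)
    (h : ∀ (i j : ℕ) (hi : i < u.length) (hj : j < u.length),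
      u[i] < u[j] ↔ v[i]'(hlen ▸ hi) < v[j]'(hlen ▸ hj)) : steps u = steps v := by
  apply List.ext_getElem (by rw [steps_length, steps_length, hlen])
  intro k h1 h2
  have hk1 : k + 1 < u.length := by rw [steps_length] at h1; omega
  have hk : k < u.length := by omega
  rw [steps_getElem, steps_getElem]
  exact stp_congr (h k (k+1) hk hk1) (h (k+1) k hk1 hk)

lemma descents_congr {u v : List ℤ} (h : steps u = steps v) : descents u = descents v := by
  rw [descents_eq, descents_eq, h]

lemma isBallot_congr {u v : List ℤ} (h : steps u = steps v) : IsBallot u ↔ IsBallot v := by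
  rw [isBallot_iff, isBallot_iff]
  unfold psum
  rw [h]

lemma depth_congr {u v : List ℤ} (hlen : u.length = v.length) (h : steps u = steps v) :
    depth u = depth v := by
  unfold depth
  rw [hlen]
  congr 2
  apply List.map_congr_left
  intro i hi
  rw [List.mem_range] at hi
  rw [ht_take_succ, ht_take_succ]
  unfold psum
  rw [h]

lemma permList_getElem {n : ℕ} (σ : Equiv.Perm (Fin n)) (i : ℕ) (h : i < n) :
    (permList σ)[i]'(by simp [permList, h]) = ((σ ⟨i, h⟩ : ℕ) : ℤ) + 1 := by
  simp [permList]

lemma permList_length {n : ℕ} (σ : Equiv.Perm (Fin n)) : (permList σ).length = n := by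
  simp [permList]

lemma steps_sorted_word {m : ℕ} (L : List ℤ) (hL : L.length = m)
    (hs : L.Pairwise (· < ·)) (σ : Equiv.Perm (Fin m)) :
    steps (List.ofFn (fun i => L[(σ i : ℕ)]'(by rw [hL]; exact (σ i).isLt)))
      = steps (permList σ) := by
  apply steps_congr (by simp [permList])
  intro i j hi hj
  simp only [List.length_ofFn] at hi hj
  have hgi : (List.ofFn (fun i => L[(σ i : ℕ)]'(by rw [hL]; exact (σ i).isLt)))[i]'(by simpa)
      = L[(σ ⟨i, hi⟩ : ℕ)]'(by rw [hL]; exact (σ _).isLt) := by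
    simp
  have hgj : (List.ofFn (fun i => L[(σ i : ℕ)]'(by rw [hL]; exact (σ i).isLt)))[j]'(by simpa)
      = L[(σ ⟨j, hj⟩ : ℕ)]'(by rw [hL]; exact (σ _).isLt) := by
    simp
  rw [hgi, hgj, permList_getElem σ i hi, permList_getElem σ j hj]
  have hmono := hs.sortedLT.strictMono_get
  have h1 : L[(σ ⟨i, hi⟩ : ℕ)]'(by rw [hL]; exact (σ _).isLt)
      < L[(σ ⟨j, hj⟩ : ℕ)]'(by rw [hL]; exact (σ _).isLt)
      ↔ σ ⟨i, hi⟩ < σ ⟨j, hj⟩ := by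
    constructor
    · intro hlt
      by_contra hge
      push_neg at hge
      rcases eq_or_lt_of_le hge with he | hlt2
      · rw [show σ ⟨j, hj⟩ = σ ⟨i, hi⟩ from he] at hlt
        exact lt_irrefl _ hlt
      · have := hmono (show (⟨(σ ⟨j, hj⟩ : ℕ), by rw [hL]; exact (σ _).isLt⟩ : Fin L.length)
          < ⟨(σ ⟨i, hi⟩ : ℕ), by rw [hL]; exact (σ _).isLt⟩ from hlt2)
        simp only [List.get_eq_getElem] at this
        exact absurd hlt (not_lt_of_gt this)
    · intro hlt
      have := hmono (show (⟨(σ ⟨i, hi⟩ : ℕ), by rw [hL]; exact (σ _).isLt⟩ : Fin L.length)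
          < ⟨(σ ⟨j, hj⟩ : ℕ), by rw [hL]; exact (σ _).isLt⟩ from hlt)
      simpa using this
  rw [h1]
  constructor
  · intro hlt
    have : (σ ⟨i, hi⟩ : ℕ) < (σ ⟨j, hj⟩ : ℕ) := hlt
    omega
  · intro hlt
    have : (σ ⟨i, hi⟩ : ℕ) < (σ ⟨j, hj⟩ : ℕ) := by
      have h2 : ((σ ⟨i, hi⟩ : ℕ) : ℤ) < ((σ ⟨j, hj⟩ : ℕ) : ℤ) := by omega
      exact_mod_cast h2
    exact this


-- ===== word-level forms of Pdp, Bdes, bcount =====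

noncomputable def permsOf (A : Finset ℤ) : Finset (List ℤ) :=
  (A.sort (· ≤ ·)).permutations.toFinset

lemma mem_permsOf {A : Finset ℤ} {w : List ℤ} :
    w ∈ permsOf A ↔ w.Perm (A.sort (· ≤ ·)) := by
  simp [permsOf, List.mem_permutations]

lemma sum_permsOf (A : Finset ℤ) (G : List ℤ → ℝ)
    (hG : ∀ u v : List ℤ, u.length = v.length → steps u = steps v → G u = G v) :
    ∑ w ∈ permsOf A, G w = ∑ σ : Equiv.Perm (Fin A.card), G (permList σ) := by
  rw [permsOf, ← sum_perm_eq A.card (A.sort (· ≤ ·)) (Finset.length_sort _) (A.sort_nodup (· ≤ ·))]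
  apply Finset.sum_congr rfl
  intro σ _
  apply hG
  · rw [permList_length]
    simp
  · exact steps_sorted_word _ (Finset.length_sort _) (Finset.sortedLT_sort A).pairwise σ

lemma sum_permsOf_bdes (A : Finset ℤ) (t : ℝ) :
    ∑ u ∈ permsOf A, (if IsBallot u then t ^ descents u else 0) = Bdes A.card t := by
  rw [sum_permsOf]
  · rfl
  · intro u v _ hs
    rw [descents_congr hs]
    by_cases hb : IsBallot u
    · rw [if_pos hb, if_pos ((isBallot_congr hs).mp hb)]
    · rw [if_neg hb, if_neg (fun h => hb ((isBallot_congr hs).mpr h))]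

lemma sum_permsOf_bcount (A : Finset ℤ) :
    ∑ u ∈ permsOf A, (if IsBallot u then (1:ℝ) else 0) = (bcount A.card : ℝ) := by
  have h1 : ∑ u ∈ permsOf A, (if IsBallot u then (1:ℝ) else 0)
      = ∑ σ : Equiv.Perm (Fin A.card), (if IsBallot (permList σ) then (1:ℝ) else 0) := by
    apply sum_permsOf
    intro u v _ hs
    by_cases hb : IsBallot u
    · rw [if_pos hb, if_pos ((isBallot_congr hs).mp hb)]
    · rw [if_neg hb, if_neg (fun h => hb ((isBallot_congr hs).mpr h))]
  rw [h1, Finset.sum_boole]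
  congr 1
  rw [bcount, Nat.card_eq_fintype_card, Fintype.card_subtype]

lemma flatMap_single (l : List ℕ) : (l.flatMap fun a => [(a:ℤ)]) = l.map (fun a : ℕ => (a:ℤ)) := by
  induction l <;> simp_all

lemma baseList_eq (n : ℕ) : baseList n = (List.range n).map (fun i : ℕ => (i : ℤ) + 1) := by
  unfold baseList
  simp only [List.bind_eq_flatMap, List.pure_def, flatMap_single, List.map_map]
  induction (List.range n) with
  | nil => rfl
  | cons a t ih => simp_all

lemma baseList_length (n : ℕ) : (baseList n).length = n := by
  rw [baseList_eq, List.length_map, List.length_range]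

lemma baseList_nodup (n : ℕ) : (baseList n).Nodup := by
  rw [baseList_eq]
  apply List.Nodup.map
  · intro a b hab
    simp only at hab
    omega
  · exact List.nodup_range

lemma baseList_getElem (n : ℕ) (i : ℕ) (h : i < n) :
    (baseList n)[i]'(by rw [baseList_length]; exact h) = (i : ℤ) + 1 := by
  rw [List.getElem_of_eq (baseList_eq n), List.getElem_map, List.getElem_range]

lemma Pdp_eq (n : ℕ) (z : ℝ) :
    Pdp n z = ∑ w ∈ (baseList n).permutations.toFinset, z ^ (depth w).toNat := by
  rw [← sum_perm_eq n (baseList n) (baseList_length n) (baseList_nodup n)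
    (fun w => z ^ (depth w).toNat)]
  apply Finset.sum_congr rfl
  intro σ _
  have hw : (List.ofFn fun i => (baseList n)[((σ i : ℕ))]'(by rw [baseList_length]; exact (σ i).isLt))
      = permList σ := by
    apply List.ext_getElem (by rw [List.length_ofFn, permList_length])
    intro k h1 h2
    simp only [List.getElem_ofFn]
    rw [baseList_getElem n _ (σ _).isLt, permList_getElem σ k (by simpa using h1)]
  rw [hw]

-- ===== regrouping permutations by cut =====

lemma perm_toFinset {u v : List ℤ} (h : u.Perm v) : u.toFinset = v.toFinset := by
  ext a
  rw [List.mem_toFinset, List.mem_toFinset, h.mem_iff]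

lemma mem_permsOf_iff {A : Finset ℤ} {u : List ℤ} :
    u ∈ permsOf A ↔ u.Nodup ∧ u.toFinset = A := by
  rw [mem_permsOf]
  constructor
  · intro h
    refine ⟨h.nodup_iff.mpr (A.sort_nodup _), ?_⟩
    rw [perm_toFinset h, Finset.sort_toFinset]
  · rintro ⟨hnd, htf⟩
    apply List.perm_of_nodup_nodup_toFinset_eq hnd (A.sort_nodup _)
    rw [htf, Finset.sort_toFinset]

lemma length_of_mem_permsOf {A : Finset ℤ} {u : List ℤ} (h : u ∈ permsOf A) :
    u.length = A.card := by
  rw [mem_permsOf] at h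
  rw [h.length_eq, Finset.length_sort]

theorem regroup (z : ℝ) (n c : ℕ) (hc : c ≤ n) :
    ∑ w ∈ (baseList n).permutations.toFinset,
      (if ValidCut w c then z ^ c * (1 / z ^ 2) ^ descents ((w.take c).reverse) else 0)
    = ∑ A ∈ Finset.powersetCard c (baseList n).toFinset,
        (∑ u ∈ permsOf A, if IsBallot u then z ^ c * (1 / z ^ 2) ^ descents u else 0)
        * (∑ v ∈ permsOf ((baseList n).toFinset \ A), if IsBallot v then (1:ℝ) else 0) := by
  set T := (baseList n).toFinset with hT
  -- turn RHS into a sum over a biUnion of products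
  have hrhs : ∀ A ∈ Finset.powersetCard c T,
      (∑ u ∈ permsOf A, if IsBallot u then z ^ c * (1 / z ^ 2) ^ descents u else 0)
      * (∑ v ∈ permsOf (T \ A), if IsBallot v then (1:ℝ) else 0)
      = ∑ p ∈ (permsOf A) ×ˢ (permsOf (T \ A)),
          (if IsBallot p.1 ∧ IsBallot p.2 then z ^ c * (1 / z ^ 2) ^ descents p.1 else 0) := by
    intro A _
    rw [Finset.sum_mul_sum]
    rw [Finset.sum_product]
    apply Finset.sum_congr rfl
    intro u _
    apply Finset.sum_congr rfl
    intro v _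
    by_cases h1 : IsBallot u <;> by_cases h2 : IsBallot v <;>
      simp [h1, h2]
  rw [Finset.sum_congr rfl hrhs]
  have hdisj : (↑(Finset.powersetCard c T) : Set (Finset ℤ)).PairwiseDisjoint
      (fun A => (permsOf A) ×ˢ (permsOf (T \ A))) := by
    intro A _ B _ hAB
    simp only [Function.onFun]
    rw [Finset.disjoint_left]
    rintro ⟨u, v⟩ hpA hpB
    rw [Finset.mem_product] at hpA hpB
    have h1 := (mem_permsOf_iff.mp hpA.1).2
    have h2 := (mem_permsOf_iff.mp hpB.1).2
    exact hAB (h1 ▸ h2)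
  rw [← Finset.sum_biUnion hdisj]
  -- now a bijection between words and pairs
  apply Finset.sum_nbij' (i := fun w => (((w.take c).reverse, w.drop c) : List ℤ × List ℤ))
    (j := fun p => p.1.reverse ++ p.2)
  · intro w hw
    rw [List.mem_toFinset, List.mem_permutations] at hw
    have hnd : w.Nodup := hw.nodup_iff.mpr (baseList_nodup n)
    have hlen : w.length = n := by rw [hw.length_eq, baseList_length]
    have htf : w.toFinset = T := perm_toFinset hw
    have hndt : (w.take c).Nodup := hnd.sublist (List.take_sublist c w)
    have hndd : (w.drop c).Nodup := hnd.sublist (List.drop_sublist c w)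
    rw [Finset.mem_biUnion]
    refine ⟨(w.take c).toFinset, ?_, ?_⟩
    · rw [Finset.mem_powersetCard]
      constructor
      · intro a ha
        rw [List.mem_toFinset] at ha
        rw [← htf, List.mem_toFinset]
        exact List.mem_of_mem_take ha
      · rw [List.toFinset_card_of_nodup hndt, List.length_take]
        omega
    · rw [Finset.mem_product]
      constructor
      · rw [mem_permsOf_iff]
        exact ⟨List.nodup_reverse.mpr hndt, List.toFinset_reverse⟩
      · rw [mem_permsOf_iff]
        refine ⟨hndd, ?_⟩
        have hdd : List.Disjoint (w.take c) (w.drop c) := by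
          apply List.disjoint_of_nodup_append
          rw [List.take_append_drop]
          exact hnd
        ext b
        rw [List.mem_toFinset, Finset.mem_sdiff, ← htf, List.mem_toFinset, List.mem_toFinset]
        constructor
        · intro hb
          exact ⟨by rw [← List.take_append_drop c w]; exact List.mem_append_right _ hb,
            fun hmem => hdd hmem hb⟩
        · rintro ⟨hbw, hbt⟩
          rw [← List.take_append_drop c w] at hbw
          rcases List.mem_append.mp hbw with h | h
          · exact absurd h hbt
          · exact h
  · rintro ⟨u, v⟩ hp
    rw [Finset.mem_biUnion] at hp
    obtain ⟨A, hA, hmem⟩ := hp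
    rw [Finset.mem_product] at hmem
    rw [Finset.mem_powersetCard] at hA
    have hu : u.Perm (A.sort (· ≤ ·)) := mem_permsOf.mp hmem.1
    have hv : v.Perm ((T \ A).sort (· ≤ ·)) := mem_permsOf.mp hmem.2
    rw [List.mem_toFinset, List.mem_permutations]
    have hsortnd : ((A.sort (· ≤ ·)) ++ ((T \ A).sort (· ≤ ·))).Nodup := by
      rw [List.nodup_append]
      refine ⟨A.sort_nodup _, (T \ A).sort_nodup _, ?_⟩
      intro a ha b hb hab
      rw [Finset.mem_sort] at ha
      rw [Finset.mem_sort, Finset.mem_sdiff] at hb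
      exact hb.2 (hab ▸ ha)
    have hstep : (A.sort (· ≤ ·)) ++ ((T \ A).sort (· ≤ ·)) |>.Perm (baseList n) := by
      apply List.perm_of_nodup_nodup_toFinset_eq hsortnd (baseList_nodup n)
      rw [List.toFinset_append, Finset.sort_toFinset, Finset.sort_toFinset]
      rw [Finset.union_sdiff_of_subset hA.1]
    calc u.reverse ++ v
        |>.Perm ((A.sort (· ≤ ·)) ++ ((T \ A).sort (· ≤ ·))) :=
          List.Perm.append ((u.reverse_perm).trans hu) hv
      _ |>.Perm (baseList n) := hstep
  · intro w hw
    simp only [List.reverse_reverse, List.take_append_drop]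
  · rintro ⟨u, v⟩ hp
    rw [Finset.mem_biUnion] at hp
    obtain ⟨A, hA, hmem⟩ := hp
    rw [Finset.mem_product] at hmem
    rw [Finset.mem_powersetCard] at hA
    have hulen : u.length = c := by
      rw [length_of_mem_permsOf hmem.1, hA.2]
    have h1 : (u.reverse ++ v).take c = u.reverse := by
      apply List.take_left'
      rw [List.length_reverse, hulen]
    have h2 : (u.reverse ++ v).drop c = v := by
      apply List.drop_left'
      rw [List.length_reverse, hulen]
    rw [h1, h2, List.reverse_reverse]
  · intro w hw
    show _ = if IsBallot ((w.take c).reverse) ∧ IsBallot (w.drop c) then _ else _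
    unfold ValidCut
    simp only []
    congr 1
lemma permList_zero (σ : Equiv.Perm (Fin 0)) : permList σ = [] := by
  apply List.eq_nil_of_length_eq_zero
  rw [permList_length]

lemma depth_nil : depth ([] : List ℤ) = 0 := by
  unfold depth
  simp

lemma descents_nil : descents ([] : List ℤ) = 0 := rfl

lemma bcount_zero : bcount 0 = 1 := by
  rw [bcount, Nat.card_eq_fintype_card, Fintype.card_subtype]
  rw [Finset.filter_true_of_mem]
  · simp
  · intro σ _
    rw [permList_zero]
    exact isBallot_nil

lemma sdiff_card (n c : ℕ) (A : Finset ℤ) (hA : A ∈ Finset.powersetCard c (baseList n).toFinset) :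
    ((baseList n).toFinset \ A).card = n - c := by
  rw [Finset.mem_powersetCard] at hA
  rw [Finset.card_sdiff_of_subset hA.1, hA.2, List.toFinset_card_of_nodup (baseList_nodup n), baseList_length]

/-- (1+z) P^{dp}(x,z) - z = B^{des}(xz, 1/z²) · √((1+x)/(1-x)), stated coefficientwise
in x, using that √((1+x)/(1-x)) = Σ bₙ xⁿ/n! is the EGF of the ballot counts. -/
theorem depth_gf_relation (z : ℝ) (hz : z ≠ 0) (n : ℕ) :
    (1 + z) * Pdp n z - (if n = 0 then z else 0) =
      ∑ l ∈ Finset.range (n + 1),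
        (n.choose l : ℝ) * (z ^ l * Bdes l (1 / z ^ 2)) * (bcount (n - l) : ℝ) := by
  have hTcard : (baseList n).toFinset.card = n := by
    rw [List.toFinset_card_of_nodup (baseList_nodup n), baseList_length]
  rcases Nat.eq_zero_or_pos n with rfl | hn
  · -- n = 0
    have h1 : Pdp 0 z = 1 := by
      rw [Pdp]
      have : ∀ σ : Equiv.Perm (Fin 0), z ^ (depth (permList σ)).toNat = 1 := by
        intro σ
        rw [permList_zero, depth_nil]
        simp
      rw [Finset.sum_congr rfl (fun σ _ => this σ)]
      simp
    have h2 : Bdes 0 (1 / z ^ 2) = 1 := by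
      rw [Bdes]
      have : ∀ σ : Equiv.Perm (Fin 0),
          (if IsBallot (permList σ) then (1 / z ^ 2) ^ descents (permList σ) else 0) = 1 := by
        intro σ
        rw [permList_zero, if_pos isBallot_nil, descents_nil]
        simp
      rw [Finset.sum_congr rfl (fun σ _ => this σ)]
      simp
    rw [h1, Finset.sum_range_one, h2, bcount_zero]
    simp
  · -- n ≥ 1
    rw [if_neg (by omega), sub_zero, Pdp_eq, Finset.mul_sum]
    have hstep1 : ∀ w ∈ (baseList n).permutations.toFinset,
        (1 + z) * z ^ (depth w).toNat
        = ∑ c ∈ Finset.range (n + 1),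
            (if ValidCut w c then z ^ c * (1 / z ^ 2) ^ descents ((w.take c).reverse) else 0) := by
      intro w hw
      rw [List.mem_toFinset, List.mem_permutations] at hw
      have hnd : w.Nodup := hw.nodup_iff.mpr (baseList_nodup n)
      have hlen : w.length = n := by rw [hw.length_eq, baseList_length]
      have hne : w ≠ [] := by
        intro h
        rw [h] at hlen
        simp at hlen
        omega
      have := sum_cuts hz hnd hne
      rw [hlen] at this
      rw [this, pow_succ]
      ring
    rw [Finset.sum_congr rfl hstep1, Finset.sum_comm]
    apply Finset.sum_congr rfl
    intro c hc
    rw [Finset.mem_range] at hc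
    have hc' : c ≤ n := by omega
    rw [regroup z n c hc']
    have hA : ∀ A ∈ Finset.powersetCard c (baseList n).toFinset,
        (∑ u ∈ permsOf A, if IsBallot u then z ^ c * (1 / z ^ 2) ^ descents u else 0)
        * (∑ v ∈ permsOf ((baseList n).toFinset \ A), if IsBallot v then (1:ℝ) else 0)
        = (z ^ c * Bdes c (1 / z ^ 2)) * (bcount (n - c) : ℝ) := by
      intro A hA
      have hAcard : A.card = c := (Finset.mem_powersetCard.mp hA).2
      have hfac1 : (∑ u ∈ permsOf A, if IsBallot u then z ^ c * (1 / z ^ 2) ^ descents u else 0)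
          = z ^ c * Bdes c (1 / z ^ 2) := by
        have : ∀ u ∈ permsOf A,
            (if IsBallot u then z ^ c * (1 / z ^ 2) ^ descents u else 0)
            = z ^ c * (if IsBallot u then (1 / z ^ 2) ^ descents u else 0) := by
          intro u _
          by_cases h : IsBallot u <;> simp [h]
        rw [Finset.sum_congr rfl this, ← Finset.mul_sum, sum_permsOf_bdes, hAcard]
      have hfac2 : (∑ v ∈ permsOf ((baseList n).toFinset \ A), if IsBallot v then (1:ℝ) else 0)
          = (bcount (n - c) : ℝ) := by
        rw [sum_permsOf_bcount, sdiff_card n c A hA]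
      rw [hfac1, hfac2]
    rw [Finset.sum_congr rfl hA, Finset.sum_const, Finset.card_powersetCard, hTcard,
      nsmul_eq_mul]
    ring
end
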